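/- (Corollary 1.) Fix any p_0, p_1 with 0 < p_0 < 1, 0 < p_1 < 1 and p_0 ≠ p_1. Let RR := p_1/p_0, let CLR := log(1 − p_1)/log(1 − p_0), and let OR := (p_1/(1 − p_1))/(p_0/(1 − p_0)). Then max{RR/CLR, CLR/RR} < max{RR/OR, OR/RR}. -/

import Mathlib

open Real Set

/-- `φ(t) = -(t log t)/(1-t)` is strictly increasing on `(0,1)`. -/
lemma phi_strictMono : StrictMonoOn (fun t : ℝ => -(t * Real.log t) / (1 - t)) (Ioo 0 1) := by
  have hd : ∀ t ∈ Ioo (0:ℝ) 1, HasDerivAt (fun t : ℝ => -(t * Real.log t) / (1 - t))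
      ((t - 1 - Real.log t) / (1 - t) ^ 2) t := by
    intro t ht
    obtain ⟨ht0, ht1⟩ := ht
    have h1t : (1:ℝ) - t ≠ 0 := by linarith
    have h1 : HasDerivAt (fun t : ℝ => -(t * Real.log t)) (-(Real.log t + 1)) t := by
      have := ((hasDerivAt_id t).mul (Real.hasDerivAt_log ht0.ne')).neg
      exact this.congr_deriv (by simp [ht0.ne'])
    have h2 : HasDerivAt (fun t : ℝ => 1 - t) (-1) t := by
      simpa using (hasDerivAt_id t).const_sub 1
    have := h1.div h2 h1t
    exact this.congr_deriv (by ring)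
  apply strictMonoOn_of_deriv_pos (convex_Ioo 0 1)
  · intro t ht
    exact (hd t ht).continuousAt.continuousWithinAt
  · intro t ht
    rw [interior_Ioo] at ht
    rw [(hd t ht).deriv]
    obtain ⟨ht0, ht1⟩ := ht
    have hlog : Real.log t < t - 1 := Real.log_lt_sub_one_of_pos ht0 (ne_of_lt ht1)
    have h1 : 0 < t - 1 - Real.log t := by linarith
    have h2 : (0:ℝ) < (1 - t) ^ 2 := pow_pos (by linarith) 2
    exact div_pos h1 h2

/-- `ψ(t) = -log t/(1-t)` is strictly decreasing on `(0,1)`. -/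
lemma psi_strictAnti : StrictAntiOn (fun t : ℝ => -Real.log t / (1 - t)) (Ioo 0 1) := by
  have hd : ∀ t ∈ Ioo (0:ℝ) 1, HasDerivAt (fun t : ℝ => -Real.log t / (1 - t))
      (((t - 1) / t - Real.log t) / (1 - t) ^ 2) t := by
    intro t ht
    obtain ⟨ht0, ht1⟩ := ht
    have h1t : (1:ℝ) - t ≠ 0 := by linarith
    have h1 : HasDerivAt (fun t : ℝ => -Real.log t) (-t⁻¹) t :=
      (Real.hasDerivAt_log ht0.ne').neg
    have h2 : HasDerivAt (fun t : ℝ => 1 - t) (-1) t := by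
      simpa using (hasDerivAt_id t).const_sub 1
    have := h1.div h2 h1t
    exact this.congr_deriv (by ring)
  apply strictAntiOn_of_deriv_neg (convex_Ioo 0 1)
  · intro t ht
    exact (hd t ht).continuousAt.continuousWithinAt
  · intro t ht
    rw [interior_Ioo] at ht
    rw [(hd t ht).deriv]
    obtain ⟨ht0, ht1⟩ := ht
    have hinv : (1:ℝ) < 1 / t := by rw [lt_div_iff₀ ht0]; linarith
    have hlog : Real.log (1 / t) < 1 / t - 1 :=
      Real.log_lt_sub_one_of_pos (by positivity) (by linarith)
    rw [Real.log_div one_ne_zero ht0.ne', Real.log_one] at hlog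
    -- hlog : 0 - log t < 1/t - 1, so log t > 1 - 1/t
    have hnum : (t - 1) / t - Real.log t < 0 := by
      have h1 : (t - 1) / t = 1 - 1 / t := by field_simp
      rw [h1]; linarith
    have h2 : (0:ℝ) < (1 - t) ^ 2 := pow_pos (by linarith) 2
    exact div_neg_of_neg_of_pos hnum h2

lemma aux_lt (p₀ p₁ : ℝ) (h00 : 0 < p₀) (h01 : p₀ < 1)
    (h10 : 0 < p₁) (h11 : p₁ < 1) (hlt : p₀ < p₁) :
    max ((p₁ / p₀) / (Real.log (1 - p₁) / Real.log (1 - p₀)))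
        ((Real.log (1 - p₁) / Real.log (1 - p₀)) / (p₁ / p₀))
      <
    max ((p₁ / p₀) / ((p₁ / (1 - p₁)) / (p₀ / (1 - p₀))))
        (((p₁ / (1 - p₁)) / (p₀ / (1 - p₀))) / (p₁ / p₀)) := by
  set s : ℝ := 1 - p₀ with hsdef
  set t : ℝ := 1 - p₁ with htdef
  have hs0 : 0 < s := by simp [hsdef]; linarith
  have hs1 : s < 1 := by simp [hsdef]; linarith
  have ht0 : 0 < t := by simp [htdef]; linarith
  have ht1 : t < 1 := by simp [htdef]; linarith
  have hts : t < s := by simp [hsdef, htdef]; linarith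
  have hLs : Real.log s < 0 := Real.log_neg hs0 hs1
  have hLt : Real.log t < 0 := Real.log_neg ht0 ht1
  set GA : ℝ := -Real.log s / (1 - s) with hGA
  set GB : ℝ := -Real.log t / (1 - t) with hGB
  have h1s : (1:ℝ) - s = p₀ := by simp [hsdef]
  have h1t : (1:ℝ) - t = p₁ := by simp [htdef]
  have hGA0 : 0 < GA := by rw [hGA, h1s]; exact div_pos (by linarith) h00
  have hGB0 : 0 < GB := by rw [hGB, h1t]; exact div_pos (by linarith) h10
  have hGAB : GA < GB := psi_strictAnti ⟨ht0, ht1⟩ ⟨hs0, hs1⟩ hts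
  have hphi : -(t * Real.log t) / (1 - t) < -(s * Real.log s) / (1 - s) :=
    phi_strictMono ⟨ht0, ht1⟩ ⟨hs0, hs1⟩ hts
  have hkey : t * GB < s * GA := by
    have e1 : t * GB = -(t * Real.log t) / (1 - t) := by
      rw [hGB]; field_simp
    have e2 : s * GA = -(s * Real.log s) / (1 - s) := by
      rw [hGA]; field_simp
    rw [e1, e2]; exact hphi
  have hs1' : (1:ℝ) - s ≠ 0 := by rw [h1s]; exact h00.ne'
  have ht1' : (1:ℝ) - t ≠ 0 := by rw [h1t]; exact h10.ne'
  -- rewrite the four terms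
  have eU : (p₁ / p₀) / ((p₁ / (1 - p₁)) / (p₀ / (1 - p₀))) = t / s := by
    rw [← h1s, ← h1t]
    field_simp
    rw [sub_sub_cancel, sub_sub_cancel, mul_div_cancel_left₀ t hs0.ne']
  have eV : ((p₁ / (1 - p₁)) / (p₀ / (1 - p₀))) / (p₁ / p₀) = s / t := by
    rw [← h1s, ← h1t]
    field_simp
    rw [sub_sub_cancel, sub_sub_cancel, mul_div_cancel_left₀ s ht0.ne']
  have eX : (p₁ / p₀) / (Real.log (1 - p₁) / Real.log (1 - p₀)) = GA / GB := by
    rw [hGA, hGB, h1s, h1t, ← hsdef, ← htdef]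
    field_simp
  have eY : (Real.log (1 - p₁) / Real.log (1 - p₀)) / (p₁ / p₀) = GB / GA := by
    rw [hGA, hGB, h1s, h1t, ← hsdef, ← htdef]
    field_simp
  rw [eU, eV, eX, eY]
  have h1st : (1:ℝ) < s / t := (one_lt_div ht0).mpr hts
  apply max_lt
  · calc GA / GB < 1 := (div_lt_one hGB0).mpr hGAB
      _ < s / t := h1st
      _ ≤ max (t / s) (s / t) := le_max_right _ _
  · have : GB / GA < s / t := by
      rw [div_lt_div_iff₀ hGA0 ht0]
      linarith [hkey]
    calc GB / GA < s / t := this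
      _ ≤ max (t / s) (s / t) := le_max_right _ _

/-- Corollary 1: for `0 < p₀, p₁ < 1` with `p₀ ≠ p₁`, the complementary log ratio
`CLR = log(1-p₁)/log(1-p₀)` approximates the risk ratio `RR = p₁/p₀` strictly better
(in maximum relative discrepancy) than the odds ratio
`OR = (p₁/(1-p₁))/(p₀/(1-p₀))`. -/
theorem corollary1_CLR_better_than_OR (p₀ p₁ : ℝ) (h00 : 0 < p₀) (h01 : p₀ < 1)
    (h10 : 0 < p₁) (h11 : p₁ < 1) (hne : p₀ ≠ p₁) :
    max ((p₁ / p₀) / (Real.log (1 - p₁) / Real.log (1 - p₀)))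
        ((Real.log (1 - p₁) / Real.log (1 - p₀)) / (p₁ / p₀))
      <
    max ((p₁ / p₀) / ((p₁ / (1 - p₁)) / (p₀ / (1 - p₀))))
        (((p₁ / (1 - p₁)) / (p₀ / (1 - p₀))) / (p₁ / p₀)) := by
  rcases hne.lt_or_gt with h | h
  · exact aux_lt p₀ p₁ h00 h01 h10 h11 h
  · have key := aux_lt p₁ p₀ h10 h11 h00 h01 h
    have hL0 : Real.log (1 - p₀) ≠ 0 := (Real.log_neg (by linarith) (by linarith)).ne
    have hL1 : Real.log (1 - p₁) ≠ 0 := (Real.log_neg (by linarith) (by linarith)).ne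
    have hq0 : (1:ℝ) - p₀ ≠ 0 := by linarith
    have hq1 : (1:ℝ) - p₁ ≠ 0 := by linarith
    have e1 : (p₁ / p₀) / (Real.log (1 - p₁) / Real.log (1 - p₀))
        = (Real.log (1 - p₀) / Real.log (1 - p₁)) / (p₀ / p₁) := by
      field_simp
    have e2 : (Real.log (1 - p₁) / Real.log (1 - p₀)) / (p₁ / p₀)
        = (p₀ / p₁) / (Real.log (1 - p₀) / Real.log (1 - p₁)) := by
      field_simp
    have e3 : (p₁ / p₀) / ((p₁ / (1 - p₁)) / (p₀ / (1 - p₀)))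
        = ((p₀ / (1 - p₀)) / (p₁ / (1 - p₁))) / (p₀ / p₁) := by
      field_simp
    have e4 : ((p₁ / (1 - p₁)) / (p₀ / (1 - p₀))) / (p₁ / p₀)
        = (p₀ / p₁) / ((p₀ / (1 - p₀)) / (p₁ / (1 - p₁))) := by
      field_simp
    rw [e1, e2, e3, e4, max_comm ((Real.log (1 - p₀) / Real.log (1 - p₁)) / (p₀ / p₁)) _,
      max_comm (((p₀ / (1 - p₀)) / (p₁ / (1 - p₁))) / (p₀ / p₁)) _]
    exact key
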